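/- Let A = diag(S,−S,S,−S) and B = diag(T,−T,T,−T) be 8×8 block-diagonal matrices with S = [[1,0],[0,0]] and T = [[0,1],[1,0]], and M_{λ,μ} = I + λA + μB. Then the set D = {(λ,μ) ∈ ℝ² : M_{λ,μ} > 0 (positive definite)} equals {(λ,μ) : |λ| + μ² < 1}. -/

import Mathlib

open Matrix

/-- The 8×8 matrix `A = diag(S, -S, S, -S)` with `S = [[1,0],[0,0]]`. -/
noncomputable def A : Matrix (Fin 8) (Fin 8) ℝ :=
  !![1,0,0,0,0,0,0,0;
     0,0,0,0,0,0,0,0;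
     0,0,-1,0,0,0,0,0;
     0,0,0,0,0,0,0,0;
     0,0,0,0,1,0,0,0;
     0,0,0,0,0,0,0,0;
     0,0,0,0,0,0,-1,0;
     0,0,0,0,0,0,0,0]

/-- The 8×8 matrix `B = diag(T, -T, T, -T)` with `T = [[0,1],[1,0]]`. -/
noncomputable def B : Matrix (Fin 8) (Fin 8) ℝ :=
  !![0,1,0,0,0,0,0,0;
     1,0,0,0,0,0,0,0;
     0,0,0,-1,0,0,0,0;
     0,0,-1,0,0,0,0,0;
     0,0,0,0,0,1,0,0;
     0,0,0,0,1,0,0,0;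
     0,0,0,0,0,0,0,-1;
     0,0,0,0,0,0,-1,0]

/-- The matrix `M_{λ,μ} = I + λA + μB`. -/
noncomputable def M (l m : ℝ) : Matrix (Fin 8) (Fin 8) ℝ := 1 + l • A + m • B

set_option maxHeartbeats 800000 in
lemma A_symm : Aᴴ = A := by
  ext i j
  rw [Matrix.conjTranspose_apply]
  fin_cases i <;> fin_cases j <;> norm_num [A]

set_option maxHeartbeats 800000 in
lemma B_symm : Bᴴ = B := by
  ext i j
  rw [Matrix.conjTranspose_apply]
  fin_cases i <;> fin_cases j <;> norm_num [B]

lemma key (c a d : ℝ) (hc : 0 < c) (h : a ≠ 0 ∨ d ≠ 0) : 0 < c * a ^ 2 + d ^ 2 := by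
  rcases h with h | h
  · have : 0 < a ^ 2 := by positivity
    nlinarith [sq_nonneg d]
  · have : 0 < d ^ 2 := by positivity
    nlinarith [mul_nonneg hc.le (sq_nonneg a)]

set_option maxHeartbeats 1000000 in
/-- The positive-definiteness domain of `M_{λ,μ}` is `{|λ| + μ² < 1}`. -/
theorem posDef_domain :
    {p : ℝ × ℝ | (M p.1 p.2).PosDef} = {p : ℝ × ℝ | |p.1| + p.2^2 < 1} := by
  ext ⟨l, m⟩
  simp only [Set.mem_setOf_eq]
  constructor
  · intro h
    have h1 := h.dotProduct_mulVec_pos (x := ![1, -m, 0, 0, 0, 0, 0, 0])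
      (by intro hc; have := congrFun hc 0; simp at this)
    have h2 := h.dotProduct_mulVec_pos (x := ![0, 0, 1, m, 0, 0, 0, 0])
      (by intro hc; have := congrFun hc 2; simp at this)
    simp [M, A, B, mulVec, dotProduct, Fin.sum_univ_succ, Matrix.one_apply] at h1 h2
    rcases abs_cases l with ⟨he, _⟩ | ⟨he, _⟩ <;> rw [he] <;> nlinarith
  · intro h
    have h1 : 0 < 1 + l - m ^ 2 := by
      rcases abs_cases l with ⟨he, h0⟩ | ⟨he, h0⟩ <;> nlinarith
    have h2 : 0 < 1 - l - m ^ 2 := by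
      rcases abs_cases l with ⟨he, h0⟩ | ⟨he, h0⟩ <;> nlinarith
    rw [posDef_iff_dotProduct_mulVec]
    constructor
    · show (M l m)ᴴ = M l m
      unfold M
      simp only [conjTranspose_add, conjTranspose_smul, conjTranspose_one, A_symm, B_symm,
        star_trivial]
    · intro x hx
      have e3 : ((2 : Fin 7).succ : Fin 8) = 3 := rfl
      have e4 : ((2 : Fin 6).succ.succ : Fin 8) = 4 := rfl
      have e5 : ((2 : Fin 5).succ.succ.succ : Fin 8) = 5 := rfl
      have e6 : ((2 : Fin 4).succ.succ.succ.succ : Fin 8) = 6 := rfl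
      have e7 : ((2 : Fin 3).succ.succ.succ.succ.succ : Fin 8) = 7 := rfl
      simp [M, A, B, mulVec, dotProduct, Fin.sum_univ_succ, Matrix.one_apply,
        e3, e4, e5, e6, e7]
      obtain ⟨i, hi⟩ := Function.ne_iff.mp hx
      simp only [Pi.zero_apply] at hi
      have t1 : 0 ≤ (1 + l - m ^ 2) * (x 0) ^ 2 + (m * x 0 + x 1) ^ 2 := by positivity
      have t2 : 0 ≤ (1 - l - m ^ 2) * (x 2) ^ 2 + (m * x 2 - x 3) ^ 2 := by positivity
      have t3 : 0 ≤ (1 + l - m ^ 2) * (x 4) ^ 2 + (m * x 4 + x 5) ^ 2 := by positivity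
      have t4 : 0 ≤ (1 - l - m ^ 2) * (x 6) ^ 2 + (m * x 6 - x 7) ^ 2 := by positivity
      fin_cases i
      · have hi' : x 0 ≠ 0 := hi
        have := key _ (x 0) (m * x 0 + x 1) h1 (Or.inl hi'); linarith [t1, t2, t3, t4, this]
      · have hi' : x 1 ≠ 0 := hi
        have := key _ (x 0) (m * x 0 + x 1) h1 (by
          by_contra hc
          push_neg at hc
          apply hi'
          have := hc.2
          rw [hc.1] at this
          linarith [this]); linarith [t1, t2, t3, t4, this]
      · have hi' : x 2 ≠ 0 := hi
        have := key _ (x 2) (m * x 2 - x 3) h2 (Or.inl hi'); linarith [t1, t2, t3, t4, this]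
      · have hi' : x 3 ≠ 0 := hi
        have := key _ (x 2) (m * x 2 - x 3) h2 (by
          by_contra hc
          push_neg at hc
          apply hi'
          have := hc.2
          rw [hc.1] at this
          linarith [this]); linarith [t1, t2, t3, t4, this]
      · have hi' : x 4 ≠ 0 := hi
        have := key _ (x 4) (m * x 4 + x 5) h1 (Or.inl hi'); linarith [t1, t2, t3, t4, this]
      · have hi' : x 5 ≠ 0 := hi
        have := key _ (x 4) (m * x 4 + x 5) h1 (by
          by_contra hc
          push_neg at hc
          apply hi'
          have := hc.2
          rw [hc.1] at this
          linarith [this]); linarith [t1, t2, t3, t4, this]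
      · have hi' : x 6 ≠ 0 := hi
        have := key _ (x 6) (m * x 6 - x 7) h2 (Or.inl hi'); linarith [t1, t2, t3, t4, this]
      · have hi' : x 7 ≠ 0 := hi
        have := key _ (x 6) (m * x 6 - x 7) h2 (by
          by_contra hc
          push_neg at hc
          apply hi'
          have := hc.2
          rw [hc.1] at this
          linarith [this]); linarith [t1, t2, t3, t4, this]
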